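/- arXiv:1504.00786 — 2 statements merged into one kernel-verified Lean document; each statement's English description precedes it below -/
import Mathlib

section
/- Let μ be a measure on a metric measure space and suppose there exist constants C₁, C₂ > 0 and D ≥ 1 such that for every x and every 0 < R₀ ≤ R one has μ(B(x,R)) ≤ C₁ R^D / (R₀^D p(x,x,R₀²)) and p(x,x,2R²) ≥ C₂ / μ(B(x,R)), where p denotes a positive heat kernel. Then μ satisfies a volume doubling property: there exists a constant C₄ = C₄(C₁,C₂,D) such that μ(B(x,R)) ≤ C₄ μ(B(x,R/2)) for all x and R > 0. -/
open MeasureTheory Metric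

/-- Volume doubling from the on-diagonal heat kernel upper and lower bounds. -/
theorem volume_doubling_of_heat_kernel_bounds
    {M : Type*} [PseudoMetricSpace M] [MeasurableSpace M]
    (μ : Measure M) (p : M → M → ℝ → ℝ)
    (C₁ C₂ D : ℝ) (hC₁ : 0 < C₁) (hC₂ : 0 < C₂) (hD : 1 ≤ D)
    (hker : ∀ x t, 0 < t → 0 < p x x t)
    (hVpos : ∀ x R, 0 < R → 0 < (μ (ball x R)).toReal)
    (hupper : ∀ x R₀ R, 0 < R₀ → R₀ ≤ R →
      (μ (ball x R)).toReal ≤ C₁ * R ^ D / (R₀ ^ D * p x x (R₀ ^ 2)))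
    (hlower : ∀ x R, 0 < R →
      C₂ / (μ (ball x R)).toReal ≤ p x x (2 * R ^ 2)) :
    ∃ C₄ : ℝ, 0 < C₄ ∧ ∀ x R, 0 < R →
      (μ (ball x R)).toReal ≤ C₄ * (μ (ball x (R / 2))).toReal := by
  have hs : (0:ℝ) < Real.sqrt 2 := Real.sqrt_pos.mpr (by norm_num)
  have hs1 : (1:ℝ) ≤ Real.sqrt 2 := by
    rw [show (1:ℝ) = Real.sqrt 1 from Real.sqrt_one.symm]
    exact Real.sqrt_le_sqrt (by norm_num)
  refine ⟨C₁ * Real.sqrt 2 ^ D / C₂, by positivity, ?_⟩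
  intro x R hR
  set R₀ : ℝ := R / Real.sqrt 2 with hR₀def
  have hR₀ : 0 < R₀ := div_pos hR hs
  have hle : R₀ ≤ R := div_le_self hR.le hs1
  set V : ℝ := (μ (ball x (R / 2))).toReal with hVdef
  have hV : 0 < V := hVpos x (R / 2) (by positivity)
  have hsq : R₀ ^ 2 = 2 * (R / 2) ^ 2 := by
    rw [hR₀def, div_pow, Real.sq_sqrt (by norm_num : (0:ℝ) ≤ 2)]
    ring
  have hp : C₂ / V ≤ p x x (R₀ ^ 2) := by
    rw [hsq]; exact hlower x (R / 2) (by positivity)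
  have hppos : 0 < p x x (R₀ ^ 2) := hker x _ (by positivity)
  have hu := hupper x R₀ R hR₀ hle
  have hstep : C₁ * R ^ D / (R₀ ^ D * p x x (R₀ ^ 2))
      ≤ C₁ * R ^ D / (R₀ ^ D * (C₂ / V)) := by
    apply div_le_div_of_nonneg_left (by positivity) (by positivity)
    exact mul_le_mul_of_nonneg_left hp (by positivity)
  have hR₀D : R₀ ^ D = R ^ D / Real.sqrt 2 ^ D := by
    rw [hR₀def, Real.div_rpow hR.le hs.le]
  have hfin : C₁ * R ^ D / (R₀ ^ D * (C₂ / V))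
      = C₁ * Real.sqrt 2 ^ D / C₂ * V := by
    rw [hR₀D]
    have hRD : (0:ℝ) < R ^ D := by positivity
    have hsD : (0:ℝ) < Real.sqrt 2 ^ D := by positivity
    field_simp
  calc (μ (ball x R)).toReal ≤ C₁ * R ^ D / (R₀ ^ D * p x x (R₀ ^ 2)) := hu
    _ ≤ C₁ * R ^ D / (R₀ ^ D * (C₂ / V)) := hstep
    _ = C₁ * Real.sqrt 2 ^ D / C₂ * V := hfin
end

section
/- Let (M,d,μ) be a metric measure space with a heat kernel p(x,y,t) satisfying p(x,y,t) ≤ C / μ(B(x,√t)) · exp(−d(x,y)²/(5t)) and the doubling property μ(B(x,R)) ≤ C_D (R/r)^D μ(B(x,r)) for r ≤ R. Fix x ∈ M, R ≥ 1, A > 0 and a > −D−2. If f ≥ 0 is a bounded measurable function with (1/μ(B(x,r))) ∫_{B(x,r)} f dμ ≤ A r^a for all r ≥ R, then u(x,t) := ∫_M p(x,y,t) f(y) dμ(y) satisfies u(x,t) ≤ C(D,a) A t^{a/2} for all t ≥ R². -/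
open MeasureTheory Metric

/-- Summability of the annulus series: `exp((4-4^k)/5) * (2^(k+1))^c` is summable. -/
lemma moment_aux_summable (c : ℝ) :
    Summable (fun k : ℕ => Real.exp ((4 - (4:ℝ)^k)/5) * ((2:ℝ)^(k+1)) ^ c) := by
  apply summable_of_ratio_norm_eventually_le (r := 1/2) (by norm_num)
  have htend : Filter.Tendsto (fun k : ℕ => (2:ℝ) ^ c * Real.exp (-(3 * (4:ℝ)^k / 5)))
      Filter.atTop (nhds ((2:ℝ)^c * 0)) := by
    apply Filter.Tendsto.const_mul
    apply Real.tendsto_exp_atBot.comp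
    apply Filter.tendsto_neg_atBot_iff.mpr
    apply Filter.Tendsto.atTop_div_const (by norm_num)
    exact (tendsto_pow_atTop_atTop_of_one_lt (by norm_num : (1:ℝ) < 4)).const_mul_atTop
      (by norm_num)
  rw [mul_zero] at htend
  filter_upwards [htend.eventually_lt_const (by norm_num : (0:ℝ) < 1/2)] with k hk
  have hbk : (0:ℝ) ≤ Real.exp ((4 - (4:ℝ)^k)/5) * ((2:ℝ)^(k+1)) ^ c := by positivity
  have hsplit : Real.exp ((4 - (4:ℝ)^(k+1))/5) * ((2:ℝ)^(k+1+1)) ^ c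
      = ((2:ℝ)^c * Real.exp (-(3 * (4:ℝ)^k / 5)))
        * (Real.exp ((4 - (4:ℝ)^k)/5) * ((2:ℝ)^(k+1)) ^ c) := by
    have h1 : ((2:ℝ)^(k+1+1)) ^ c = (2:ℝ)^c * ((2:ℝ)^(k+1)) ^ c := by
      rw [pow_succ, mul_comm ((2:ℝ)^(k+1)) 2, Real.mul_rpow (by norm_num) (by positivity)]
    have h2 : Real.exp ((4 - (4:ℝ)^(k+1))/5)
        = Real.exp (-(3 * (4:ℝ)^k / 5)) * Real.exp ((4 - (4:ℝ)^k)/5) := by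
      rw [← Real.exp_add]; ring_nf
    rw [h1, h2]; ring
  rw [Real.norm_eq_abs, Real.norm_eq_abs, abs_of_nonneg hbk, abs_of_nonneg (by positivity),
    hsplit]
  exact mul_le_mul_of_nonneg_right hk.le hbk

/-- CR moment-type estimate, abstracted to a metric measure space with a Gaussian heat kernel
upper bound and volume doubling: if the averages of a nonnegative bounded function `f` over
balls of radius `r ≥ R` grow at most like `A r^a` with `a > -D-2`, then the heat evolution
`u(x,t) = ∫ p(x,y,t) f(y) dμ(y)` satisfies `u(x,t) ≤ C(D,a) A t^(a/2)` for `t ≥ R²`. -/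
theorem moment_type_estimate
    {M : Type*} [MetricSpace M] [MeasurableSpace M]
    (μ : Measure M) (p : M → M → ℝ → ℝ)
    (C C_D D A a R : ℝ) (x : M)
    (hC : 0 < C) (hCD : 0 < C_D) (hD : 0 < D) (hA : 0 < A) (hR : 1 ≤ R)
    (ha : -D - 2 < a)
    (hVpos : ∀ z r, 0 < r → 0 < (μ (ball z r)).toReal)
    (hker_nonneg : ∀ y t, 0 < t → 0 ≤ p x y t)
    (hgauss : ∀ y t, 0 < t →
      p x y t ≤ C / (μ (ball x (Real.sqrt t))).toReal
          * Real.exp (-(dist x y) ^ 2 / (5 * t)))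
    (hdoubling : ∀ z r R', 0 < r → r ≤ R' →
      (μ (ball z R')).toReal ≤ C_D * (R' / r) ^ D * (μ (ball z r)).toReal)
    (f : M → ℝ) (hf_meas : Measurable f) (hf_nonneg : ∀ y, 0 ≤ f y)
    (hf_bdd : ∃ B : ℝ, ∀ y, f y ≤ B)
    (havg : ∀ r : ℝ, R ≤ r →
      (∫ y in ball x r, f y ∂μ) ≤ A * r ^ a * (μ (ball x r)).toReal) :
    ∃ K : ℝ, 0 < K ∧ ∀ t : ℝ, R ^ 2 ≤ t →
      (∫ y, p x y t * f y ∂μ) ≤ K * A * t ^ (a / 2) := by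
  obtain ⟨B, hB⟩ := hf_bdd
  -- the series of annulus coefficients
  set b : ℕ → ℝ := fun k => Real.exp ((4 - (4:ℝ)^k)/5) * ((2:ℝ)^(k+1)) ^ (a + D) with hb_def
  have hb_summable : Summable b := moment_aux_summable (a + D)
  have hb_nonneg : ∀ k, 0 ≤ b k := fun k => by positivity
  have hb_pos0 : 0 < b 0 := by positivity
  have htsum_pos : 0 < ∑' k, b k := Summable.tsum_pos hb_summable hb_nonneg 0 hb_pos0
  refine ⟨C * C_D * ∑' k, b k, by positivity, ?_⟩
  intro t ht
  have ht1 : (1:ℝ) ≤ t := le_trans (one_le_pow₀ hR) ht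
  have ht0 : (0:ℝ) < t := lt_of_lt_of_le one_pos ht1
  set s : ℝ := Real.sqrt t with hs_def
  have hs0 : 0 < s := Real.sqrt_pos.2 ht0
  have hsR : R ≤ s := by
    have : Real.sqrt (R^2) ≤ s := Real.sqrt_le_sqrt ht
    rwa [Real.sqrt_sq (le_trans zero_le_one hR)] at this
  have hs_sq : s ^ 2 = t := Real.sq_sqrt ht0.le
  set V : ℝ := (μ (ball x s)).toReal with hV_def
  have hV : 0 < V := hVpos x s hs0
  have hsa : s ^ a = t ^ (a/2) := by
    rw [hs_def, Real.sqrt_eq_rpow, ← Real.rpow_mul ht0.le]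
    congr 1
    ring
  -- nonnegativity of the right-hand side
  have hrhs_nonneg : (0:ℝ) ≤ C * C_D * (∑' k, b k) * A * t ^ (a/2) := by positivity
  -- finiteness of balls, integrability of f on balls
  have hfin : ∀ r : ℝ, 0 < r → μ (ball x r) ≠ ⊤ := by
    intro r hr h
    have := hVpos x r hr
    simp [h] at this
  have hint_ball : ∀ r : ℝ, 0 < r → IntegrableOn f (ball x r) μ := by
    intro r hr
    have hconst : IntegrableOn (fun _ => B) (ball x r) μ :=
      integrableOn_const (hfin r hr)
    exact Integrable.mono' hconst hf_meas.aestronglyMeasurable.restrict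
      (ae_of_all _ fun y => by
        rw [Real.norm_eq_abs, abs_of_nonneg (hf_nonneg y)]; exact hB y)
  -- the annuli
  set S : ℕ → Set M :=
    fun k => ball x ((2:ℝ)^(k+1) * s) \ ball x ((if k = 0 then 0 else (2:ℝ)^k) * s)
    with hS_def
  have hS_cover : (⋃ k, S k) = Set.univ := by
    ext y
    simp only [Set.mem_iUnion, Set.mem_univ, iff_true]
    have hex : ∃ n : ℕ, dist y x < (2:ℝ)^(n+1) * s := by
      obtain ⟨n, hn⟩ := pow_unbounded_of_one_lt (dist y x / s) (by norm_num : (1:ℝ) < 2)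
      refine ⟨n, ?_⟩
      have : dist y x < 2 ^ n * s := by
        rw [div_lt_iff₀ hs0] at hn; linarith
      have h2 : (2:ℝ)^n * s ≤ (2:ℝ)^(n+1) * s := by
        apply mul_le_mul_of_nonneg_right _ hs0.le
        exact pow_le_pow_right₀ (by norm_num) (Nat.le_succ n)
      linarith
    refine ⟨Nat.find hex, ?_, ?_⟩
    · exact mem_ball.2 (Nat.find_spec hex)
    · intro hmem
      rw [mem_ball] at hmem
      rcases Nat.eq_zero_or_pos (Nat.find hex) with h0 | hpos
      · rw [h0] at hmem; simp at hmem
        have := hs0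
        nlinarith [dist_nonneg (x := y) (y := x)]
      · have hne : Nat.find hex ≠ 0 := Nat.pos_iff_ne_zero.mp hpos
        rw [if_neg hne] at hmem
        have hmin := Nat.find_min hex (m := Nat.find hex - 1) (by omega)
        have hk1 : Nat.find hex - 1 + 1 = Nat.find hex := by omega
        rw [hk1] at hmin
        exact hmin hmem
  -- per-annulus exponential bound
  have hexp_bound : ∀ k : ℕ, ∀ y ∈ S k,
      Real.exp (-(dist x y) ^ 2 / (5 * t)) ≤ Real.exp ((4 - (4:ℝ)^k)/5) := by
    intro k y hy
    apply Real.exp_le_exp.2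
    rcases Nat.eq_zero_or_pos k with h0 | hpos
    · subst h0
      have h1 : -(dist x y) ^ 2 / (5 * t) ≤ 0 :=
        div_nonpos_of_nonpos_of_nonneg (neg_nonpos.2 (sq_nonneg _)) (by positivity)
      have h2 : (0:ℝ) ≤ (4 - (4:ℝ)^(0:ℕ))/5 := by norm_num
      linarith
    · have hne : k ≠ 0 := Nat.pos_iff_ne_zero.mp hpos
      have hy2 := hy.2
      rw [if_neg hne, mem_ball, not_lt] at hy2
      have hd : (2:ℝ)^k * s ≤ dist x y := by rwa [dist_comm]
      have hd2 : (4:ℝ)^k * t ≤ (dist x y)^2 := by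
        have h4 : ((2:ℝ)^k * s)^2 = (4:ℝ)^k * t := by
          rw [mul_pow, hs_sq,
            show ((2:ℝ)^k)^2 = (4:ℝ)^k by rw [← pow_mul, mul_comm, pow_mul]; norm_num]
        calc (4:ℝ)^k * t = ((2:ℝ)^k * s)^2 := h4.symm
          _ ≤ (dist x y)^2 := by
              apply sq_le_sq' _ hd
              nlinarith [dist_nonneg (x := x) (y := y), pow_pos (by norm_num : (0:ℝ) < 2) k,
                hs0]
      rw [div_le_div_iff₀ (by positivity) (by norm_num : (0:ℝ) < 5)]
      nlinarith
  -- integral bound on balls of radius 2^(k+1) s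
  have hball : ∀ k : ℕ, (∫ y in ball x ((2:ℝ)^(k+1) * s), f y ∂μ)
      ≤ A * ((2:ℝ)^(k+1) * s) ^ a * (C_D * ((2:ℝ)^(k+1)) ^ D * V) := by
    intro k
    have hr : R ≤ (2:ℝ)^(k+1) * s := by
      have h1 : (1:ℝ) ≤ (2:ℝ)^(k+1) := one_le_pow₀ (by norm_num)
      nlinarith
    have h1 := havg _ hr
    have h2 : (μ (ball x ((2:ℝ)^(k+1) * s))).toReal
        ≤ C_D * ((2:ℝ)^(k+1)) ^ D * V := by
      have := hdoubling x s ((2:ℝ)^(k+1) * s) hs0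
        (by nlinarith [one_le_pow₀ (by norm_num : (1:ℝ) ≤ 2) (n := k+1)])
      rwa [mul_div_assoc, div_self hs0.ne', mul_one] at this
    calc (∫ y in ball x ((2:ℝ)^(k+1) * s), f y ∂μ)
        ≤ A * ((2:ℝ)^(k+1) * s) ^ a * (μ (ball x ((2:ℝ)^(k+1) * s))).toReal := h1
      _ ≤ A * ((2:ℝ)^(k+1) * s) ^ a * (C_D * ((2:ℝ)^(k+1)) ^ D * V) := by
          apply mul_le_mul_of_nonneg_left h2 (by positivity)
  -- coefficient algebra
  have hcoef : ∀ k : ℕ,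
      (C / V * Real.exp ((4 - (4:ℝ)^k)/5))
        * (A * ((2:ℝ)^(k+1) * s) ^ a * (C_D * ((2:ℝ)^(k+1)) ^ D * V))
      = C * C_D * A * t ^ (a/2) * b k := by
    intro k
    have h1 : ((2:ℝ)^(k+1) * s) ^ a = ((2:ℝ)^(k+1)) ^ a * s ^ a :=
      Real.mul_rpow (by positivity) hs0.le
    have h2 : ((2:ℝ)^(k+1)) ^ (a + D) = ((2:ℝ)^(k+1)) ^ a * ((2:ℝ)^(k+1)) ^ D :=
      Real.rpow_add (by positivity) a D
    rw [hb_def]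
    simp only []
    rw [h1, h2, hsa]
    field_simp
  -- the main lintegral estimate
  have hmain : (∫⁻ y, ENNReal.ofReal (p x y t * f y) ∂μ)
      ≤ ENNReal.ofReal (C * C_D * (∑' k, b k) * A * t ^ (a/2)) := by
    have hstep1 : (∫⁻ y, ENNReal.ofReal (p x y t * f y) ∂μ)
        ≤ ∫⁻ y, ENNReal.ofReal (C / V * Real.exp (-(dist x y) ^ 2 / (5 * t)) * f y) ∂μ := by
      apply lintegral_mono
      intro y
      apply ENNReal.ofReal_le_ofReal
      exact mul_le_mul_of_nonneg_right (hgauss y t ht0) (hf_nonneg y)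
    have hstep2 : (∫⁻ y, ENNReal.ofReal (C / V * Real.exp (-(dist x y) ^ 2 / (5 * t)) * f y) ∂μ)
        ≤ ∑' k, ∫⁻ y in S k, ENNReal.ofReal
            (C / V * Real.exp (-(dist x y) ^ 2 / (5 * t)) * f y) ∂μ := by
      rw [← setLIntegral_univ, ← hS_cover]
      exact lintegral_iUnion_le _ _
    have hstep3 : ∀ k : ℕ, (∫⁻ y in S k, ENNReal.ofReal
          (C / V * Real.exp (-(dist x y) ^ 2 / (5 * t)) * f y) ∂μ)
        ≤ ENNReal.ofReal (C * C_D * A * t ^ (a/2) * b k) := by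
      intro k
      have hc_nonneg : 0 ≤ C / V * Real.exp ((4 - (4:ℝ)^k)/5) := by positivity
      calc (∫⁻ y in S k, ENNReal.ofReal
            (C / V * Real.exp (-(dist x y) ^ 2 / (5 * t)) * f y) ∂μ)
          ≤ ∫⁻ y in S k, ENNReal.ofReal
              (C / V * Real.exp ((4 - (4:ℝ)^k)/5) * f y) ∂μ := by
            apply setLIntegral_mono
              (by fun_prop : Measurable fun y =>
                ENNReal.ofReal (C / V * Real.exp ((4 - (4:ℝ)^k)/5) * f y))
            intro y hy
            apply ENNReal.ofReal_le_ofReal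
            apply mul_le_mul_of_nonneg_right _ (hf_nonneg y)
            exact mul_le_mul_of_nonneg_left (hexp_bound k y hy) (by positivity)
        _ = ENNReal.ofReal (C / V * Real.exp ((4 - (4:ℝ)^k)/5))
              * ∫⁻ y in S k, ENNReal.ofReal (f y) ∂μ := by
            simp_rw [fun y : M => ENNReal.ofReal_mul (q := f y) hc_nonneg]
            exact lintegral_const_mul' _ _ ENNReal.ofReal_ne_top
        _ ≤ ENNReal.ofReal (C / V * Real.exp ((4 - (4:ℝ)^k)/5))
              * ∫⁻ y in ball x ((2:ℝ)^(k+1) * s), ENNReal.ofReal (f y) ∂μ := by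
            apply mul_le_mul_right
            exact lintegral_mono_set Set.diff_subset
        _ = ENNReal.ofReal (C / V * Real.exp ((4 - (4:ℝ)^k)/5))
              * ENNReal.ofReal (∫ y in ball x ((2:ℝ)^(k+1) * s), f y ∂μ) := by
            rw [ofReal_integral_eq_lintegral_ofReal
              (hint_ball _ (by positivity)) (ae_of_all _ hf_nonneg)]
        _ ≤ ENNReal.ofReal (C / V * Real.exp ((4 - (4:ℝ)^k)/5))
              * ENNReal.ofReal (A * ((2:ℝ)^(k+1) * s) ^ a * (C_D * ((2:ℝ)^(k+1)) ^ D * V)) := by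
            exact mul_le_mul_right (ENNReal.ofReal_le_ofReal (hball k)) _
        _ = ENNReal.ofReal (C * C_D * A * t ^ (a/2) * b k) := by
            rw [← ENNReal.ofReal_mul hc_nonneg, hcoef k]
    calc (∫⁻ y, ENNReal.ofReal (p x y t * f y) ∂μ)
        ≤ ∑' k, ∫⁻ y in S k, ENNReal.ofReal
            (C / V * Real.exp (-(dist x y) ^ 2 / (5 * t)) * f y) ∂μ := hstep1.trans hstep2
      _ ≤ ∑' k, ENNReal.ofReal (C * C_D * A * t ^ (a/2) * b k) :=
          ENNReal.tsum_le_tsum hstep3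
      _ = ENNReal.ofReal (∑' k, C * C_D * A * t ^ (a/2) * b k) := by
          rw [ENNReal.ofReal_tsum_of_nonneg
            (fun k => by positivity) (hb_summable.mul_left _)]
      _ = ENNReal.ofReal (C * C_D * (∑' k, b k) * A * t ^ (a/2)) := by
          rw [tsum_mul_left]
          congr 1
          ring
  -- conclude
  by_cases hint : Integrable (fun y => p x y t * f y) μ
  · rw [integral_eq_lintegral_of_nonneg_ae
      (ae_of_all _ fun y => mul_nonneg (hker_nonneg y t ht0) (hf_nonneg y))
      hint.aestronglyMeasurable]
    exact ENNReal.toReal_le_of_le_ofReal hrhs_nonneg hmain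
  · rw [integral_undef hint]
    exact hrhs_nonneg
end
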